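/- arXiv:2004.00744 — 2 statements merged into one kernel-verified Lean document; each statement's English description precedes it below -/
import Mathlib

section
/- Let G be a regular pattern graph on a pattern set 𝓡 and let p be a joint pmf satisfying marginal positivity whose selection odds model factorizes with respect to G. Then the set of observable functions w with Σ_{r ∈ 𝓡} w(ℓ, r) · p(ℓ, r) = 0 for every ℓ (conditional mean zero given L) equals the set of functions of the form (ℓ, ρ) ↦ Σ_{r ∈ 𝓡, r ≠ 1_d} (1{ρ = r} − O_r(ℓ) · 1{ρ ∈ PA(r)}) · Ψ(ℓ, r), where Ψ ranges over all observable functions; equivalently, the augmentation space 𝒢 of all mean-zero augmentations of the IPW estimator coincides with the space 𝓕 of pattern-graph augmentations. -/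
open Finset

noncomputable section

/-- Response patterns: binary vectors of length `d`, ordered pointwise (`false < true`). -/
abbrev Pat (d : ℕ) := Fin d → Bool

/-- The all-true (fully observed) pattern `1_d`. -/
def allOnes (d : ℕ) : Pat d := fun _ => true

variable {d : ℕ}


instance (r s : Pat d) : Decidable (r ≤ s) :=
  decidable_of_iff (∀ j, r j ≤ s j) (by simp [Pi.le_def])

instance (r s : Pat d) : Decidable (r < s) :=
  decidable_of_iff (r ≤ s ∧ ¬ s ≤ r) lt_iff_le_not_ge.symm

/-- Two full-data values have the same observed part under pattern `r`. -/
def agree {X : Fin d → Type*} (r : Pat d) (ℓ ℓ' : ∀ j, X j) : Prop :=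
  ∀ j, r j = true → ℓ j = ℓ' j

instance {X : Fin d → Type*} [∀ j, DecidableEq (X j)] (r : Pat d) (ℓ ℓ' : ∀ j, X j) :
    Decidable (agree r ℓ ℓ') := by
  unfold agree; infer_instance

variable {X : Fin d → Type*} [∀ j, Fintype (X j)] [∀ j, DecidableEq (X j)]

/-- `p(ℓ, A) = Σ_{s ∈ A} p(ℓ, s)`. -/
def jointA (p : (∀ j, X j) → Pat d → ℝ) (ℓ : ∀ j, X j) (A : Finset (Pat d)) : ℝ :=
  ∑ s ∈ A, p ℓ s

/-- `p_r(ℓ, s) = Σ_{ℓ' ~_r ℓ} p(ℓ', s)` : observed-data mass under pattern `r`. -/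
def obsP (p : (∀ j, X j) → Pat d → ℝ) (r : Pat d) (ℓ : ∀ j, X j) (s : Pat d) : ℝ :=
  ∑ ℓ' ∈ univ.filter (fun ℓ' => agree r ℓ ℓ'), p ℓ' s

/-- `p_r(ℓ, A) = Σ_{s ∈ A} p_r(ℓ, s)`. -/
def obsPA (p : (∀ j, X j) → Pat d → ℝ) (r : Pat d) (ℓ : ∀ j, X j) (A : Finset (Pat d)) : ℝ :=
  ∑ s ∈ A, obsP p r ℓ s

/-- `p` is a joint pmf on (full data) × (pattern set `𝓡`): nonnegative with total sum 1. -/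
def IsJointPMF (𝓡 : Finset (Pat d)) (p : (∀ j, X j) → Pat d → ℝ) : Prop :=
  (∀ ℓ, ∀ r ∈ 𝓡, 0 ≤ p ℓ r) ∧ (∑ ℓ : ∀ j, X j, ∑ r ∈ 𝓡, p ℓ r) = 1

/-- Marginal positivity: `p_r(ℓ, r) > 0` for every `ℓ` and every `r ∈ 𝓡`. -/
def MargPos (𝓡 : Finset (Pat d)) (p : (∀ j, X j) → Pat d → ℝ) : Prop :=
  ∀ ℓ, ∀ r ∈ 𝓡, 0 < obsP p r ℓ r

/-- Full positivity: `p(ℓ, r) > 0` for every `ℓ` and every `r ∈ 𝓡`. -/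
def FullPos (𝓡 : Finset (Pat d)) (p : (∀ j, X j) → Pat d → ℝ) : Prop :=
  ∀ ℓ, ∀ r ∈ 𝓡, 0 < p ℓ r

/-- Selection odds `O_r(ℓ) = p_r(ℓ, r) / p_r(ℓ, PA(r))`. -/
def odds (p : (∀ j, X j) → Pat d → ℝ) (PA : Pat d → Finset (Pat d)) (r : Pat d)
    (ℓ : ∀ j, X j) : ℝ :=
  obsP p r ℓ r / obsPA p r ℓ (PA r)

/-- A regular pattern graph on `𝓡`: `1_d` is a source, and every other pattern in `𝓡`
has a nonempty parent set inside `𝓡` consisting of strictly larger patterns. -/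
def IsRegularGraph (𝓡 : Finset (Pat d)) (PA : Pat d → Finset (Pat d)) : Prop :=
  PA (allOnes d) = ∅ ∧
    ∀ r ∈ 𝓡, r ≠ allOnes d → (PA r).Nonempty ∧ PA r ⊆ 𝓡 ∧ ∀ s ∈ PA r, r < s

/-- The selection odds model of `p` factorizes with respect to the pattern graph. -/
def SelOddsFactorizes (𝓡 : Finset (Pat d)) (PA : Pat d → Finset (Pat d))
    (p : (∀ j, X j) → Pat d → ℝ) : Prop :=
  ∀ r ∈ 𝓡, r ≠ allOnes d → ∀ ℓ, p ℓ r = jointA p ℓ (PA r) * odds p PA r ℓ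

/-- The pattern mixture model of `p` factorizes with respect to the pattern graph. -/
def PMMFactorizes (𝓡 : Finset (Pat d)) (PA : Pat d → Finset (Pat d))
    (p : (∀ j, X j) → Pat d → ℝ) : Prop :=
  ∀ r ∈ 𝓡, r ≠ allOnes d → ∀ ℓ,
    p ℓ r * obsPA p r ℓ (PA r) = jointA p ℓ (PA r) * obsP p r ℓ r

/-- A path from `u` to `v` in the pattern graph: a nonempty sequence
`u = r_0, r_1, …, r_m = v` of patterns in `𝓡` with `r_i ∈ PA(r_{i+1})`. -/
def IsPath (𝓡 : Finset (Pat d)) (PA : Pat d → Finset (Pat d)) (u v : Pat d)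
    (Ξ : List (Pat d)) : Prop :=
  Ξ ≠ [] ∧ Ξ.head? = some u ∧ Ξ.getLast? = some v ∧ (∀ q ∈ Ξ, q ∈ 𝓡) ∧
    Ξ.Chain' (fun a b => a ∈ PA b)

/-- A function of `(ℓ, r)` is observable on `𝓡` if, for each pattern `r ∈ 𝓡`, it depends
on `ℓ` only through the coordinates observed under `r`. -/
def Observable (𝓡 : Finset (Pat d)) {X : Fin d → Type*}
    (w : (∀ j, X j) → Pat d → ℝ) : Prop :=
  ∀ r ∈ 𝓡, ∀ ℓ ℓ', agree r ℓ ℓ' → w ℓ r = w ℓ' r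

/-! ### Auxiliary lemmas -/

/-- Number of observed coordinates. -/
def cardT (r : Pat d) : ℕ := (univ.filter fun j => r j = true).card

lemma cardT_lt {r s : Pat d} (h : r < s) : cardT r < cardT s := by
  apply Finset.card_lt_card
  rw [Finset.ssubset_iff_of_subset]
  · obtain ⟨j, hj⟩ := Function.ne_iff.mp h.ne
    refine ⟨j, ?_, ?_⟩ <;> simp only [Finset.mem_filter, Finset.mem_univ, true_and]
    · have := h.le j
      revert hj this; cases r j <;> cases s j <;> simp
    · have := h.le j
      revert hj this; cases r j <;> cases s j <;> simp
  · intro j hj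
    simp only [Finset.mem_filter, Finset.mem_univ, true_and] at *
    have := h.le j
    revert hj this; cases r j <;> cases s j <;> simp

lemma agree_mono {r ρ : Pat d} {X : Fin d → Type*} (h : r ≤ ρ) {ℓ ℓ' : ∀ j, X j}
    (ha : agree ρ ℓ ℓ') : agree r ℓ ℓ' := by
  intro j hj
  apply ha j
  have := h j
  revert hj this; cases r j <;> cases ρ j <;> simp

lemma obsP_congr (p : (∀ j, X j) → Pat d → ℝ) {r : Pat d} {ℓ ℓ' : ∀ j, X j}
    (h : agree r ℓ ℓ') (s : Pat d) : obsP p r ℓ s = obsP p r ℓ' s := by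
  unfold obsP
  congr 1
  ext ℓ''
  simp only [Finset.mem_filter, Finset.mem_univ, true_and]
  constructor
  · intro hh j hj; rw [← h j hj]; exact hh j hj
  · intro hh j hj; rw [h j hj]; exact hh j hj

lemma odds_congr (p : (∀ j, X j) → Pat d → ℝ) (PA : Pat d → Finset (Pat d)) {r : Pat d}
    {ℓ ℓ' : ∀ j, X j} (h : agree r ℓ ℓ') : odds p PA r ℓ = odds p PA r ℓ' := by
  unfold odds obsPA
  rw [obsP_congr p h]
  congr 1
  exact Finset.sum_congr rfl fun s _ => obsP_congr p h s

lemma obsP_allOnes (p : (∀ j, X j) → Pat d → ℝ) (ℓ : ∀ j, X j) (s : Pat d) :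
    obsP p (allOnes d) ℓ s = p ℓ s := by
  unfold obsP
  have : univ.filter (fun ℓ' => agree (allOnes d) ℓ ℓ') = {ℓ} := by
    ext ℓ'
    simp only [Finset.mem_filter, Finset.mem_univ, true_and, Finset.mem_singleton, agree,
      allOnes]
    constructor
    · intro hh; exact (funext fun j => (hh j trivial)).symm
    · rintro rfl; intro j _; rfl
  rw [this, Finset.sum_singleton]

/-- The canonical augmentation coefficient `Ψ`, defined by top-down recursion. -/
def Psi (𝓡 : Finset (Pat d)) (PA : Pat d → Finset (Pat d)) (p : (∀ j, X j) → Pat d → ℝ)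
    (w : (∀ j, X j) → Pat d → ℝ) (ρ : Pat d) (ℓ : ∀ j, X j) : ℝ :=
  w ℓ ρ + ∑ r ∈ ((𝓡.erase (allOnes d)).filter (fun r => ρ ∈ PA r ∧ r < ρ)).attach,
    odds p PA r.1 ℓ * Psi 𝓡 PA p w r.1 ℓ
termination_by cardT ρ
decreasing_by
  have := r.2
  simp only [Finset.mem_filter] at this
  exact cardT_lt this.2.2

lemma Psi_eq (𝓡 : Finset (Pat d)) (PA : Pat d → Finset (Pat d)) (p : (∀ j, X j) → Pat d → ℝ)
    (w : (∀ j, X j) → Pat d → ℝ) (ρ : Pat d) (ℓ : ∀ j, X j) :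
    Psi 𝓡 PA p w ρ ℓ =
      w ℓ ρ + ∑ r ∈ (𝓡.erase (allOnes d)).filter (fun r => ρ ∈ PA r ∧ r < ρ),
        odds p PA r ℓ * Psi 𝓡 PA p w r ℓ := by
  rw [Psi]
  congr 1
  exact Finset.sum_attach _ fun r => odds p PA r ℓ * Psi 𝓡 PA p w r ℓ

lemma Psi_obs (𝓡 : Finset (Pat d)) (PA : Pat d → Finset (Pat d)) (p : (∀ j, X j) → Pat d → ℝ)
    (w : (∀ j, X j) → Pat d → ℝ) (hw : Observable 𝓡 w)
    (ρ : Pat d) (hρ : ρ ∈ 𝓡) (ℓ ℓ' : ∀ j, X j) (ha : agree ρ ℓ ℓ') :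
    Psi 𝓡 PA p w ρ ℓ = Psi 𝓡 PA p w ρ ℓ' := by
  rw [Psi_eq, Psi_eq]
  congr 1
  · exact hw ρ hρ ℓ ℓ' ha
  · apply Finset.sum_congr rfl
    intro r hr
    simp only [Finset.mem_filter, Finset.mem_erase] at hr
    have har : agree r ℓ ℓ' := agree_mono hr.2.2.le ha
    rw [odds_congr p PA har, Psi_obs 𝓡 PA p w hw r hr.1.2 ℓ ℓ' har]
termination_by cardT ρ
decreasing_by
  simp only [Finset.mem_filter] at hr
  exact cardT_lt hr.2.2

/-- Any pattern-graph augmentation has conditional mean zero. -/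
lemma aug_mean_zero (𝓡 : Finset (Pat d)) (PA : Pat d → Finset (Pat d))
    (hG : IsRegularGraph 𝓡 PA) (p : (∀ j, X j) → Pat d → ℝ)
    (hfact : SelOddsFactorizes 𝓡 PA p) (Ψ : (∀ j, X j) → Pat d → ℝ) (ℓ : ∀ j, X j) :
    ∑ ρ ∈ 𝓡, (∑ r ∈ 𝓡.erase (allOnes d),
        ((if ρ = r then (1:ℝ) else 0)
          - odds p PA r ℓ * (if ρ ∈ PA r then (1:ℝ) else 0)) * Ψ ℓ r) * p ℓ ρ = 0 := by
  have key : ∀ ρ ∈ 𝓡, (∑ r ∈ 𝓡.erase (allOnes d),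
      ((if ρ = r then (1:ℝ) else 0)
        - odds p PA r ℓ * (if ρ ∈ PA r then (1:ℝ) else 0)) * Ψ ℓ r) * p ℓ ρ
      = ∑ r ∈ 𝓡.erase (allOnes d),
        ((if ρ = r then (1:ℝ) else 0)
          - odds p PA r ℓ * (if ρ ∈ PA r then (1:ℝ) else 0)) * Ψ ℓ r * p ℓ ρ := by
    intro ρ _; rw [Finset.sum_mul]
  rw [Finset.sum_congr rfl key, Finset.sum_comm]
  apply Finset.sum_eq_zero
  intro r hr
  obtain ⟨hrne, hr𝓡⟩ := Finset.mem_erase.mp hr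
  have h1 : ∑ ρ ∈ 𝓡, (if ρ = r then (1:ℝ) else 0) * p ℓ ρ = p ℓ r := by
    rw [Finset.sum_eq_single_of_mem r hr𝓡]
    · simp
    · intro ρ _ hne; simp [hne]
  have h2 : ∑ ρ ∈ 𝓡, (if ρ ∈ PA r then (1:ℝ) else 0) * p ℓ ρ = jointA p ℓ (PA r) := by
    have hsub : PA r ⊆ 𝓡 := (hG.2 r hr𝓡 hrne).2.1
    have : (∑ ρ ∈ 𝓡, (if ρ ∈ PA r then (1:ℝ) else 0) * p ℓ ρ)
        = ∑ ρ ∈ 𝓡.filter (· ∈ PA r), p ℓ ρ := by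
      rw [Finset.sum_filter]
      exact Finset.sum_congr rfl fun ρ _ => by split <;> simp
    rw [this, Finset.filter_mem_eq_inter, Finset.inter_eq_right.mpr hsub]
    rfl
  have hterm : ∀ ρ, ((if ρ = r then (1:ℝ) else 0)
        - odds p PA r ℓ * (if ρ ∈ PA r then (1:ℝ) else 0)) * Ψ ℓ r * p ℓ ρ
      = Ψ ℓ r * ((if ρ = r then (1:ℝ) else 0) * p ℓ ρ)
        - (Ψ ℓ r * odds p PA r ℓ) * ((if ρ ∈ PA r then (1:ℝ) else 0) * p ℓ ρ) := by
    intro ρ; ring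
  rw [Finset.sum_congr rfl fun ρ _ => hterm ρ, Finset.sum_sub_distrib,
    ← Finset.mul_sum, ← Finset.mul_sum, h1, h2, hfact r hr𝓡 hrne ℓ]
  ring

/-- **Proposition (pattern-graph augmentation space).** Under selection-odds factorization
w.r.t. a regular pattern graph, the space of observable functions with conditional mean
zero given `L` coincides with the space of pattern-graph augmentations
`(ℓ, ρ) ↦ Σ_{r ≠ 1_d} (1{ρ = r} − O_r(ℓ)·1{ρ ∈ PA(r)})·Ψ(ℓ, r)` with `Ψ` observable. -/
theorem augmentation_space_pattern_graph [∀ j, Nonempty (X j)]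
    (𝓡 : Finset (Pat d)) (h𝓡 : allOnes d ∈ 𝓡)
    (PA : Pat d → Finset (Pat d)) (hG : IsRegularGraph 𝓡 PA)
    (p : (∀ j, X j) → Pat d → ℝ)
    (hpmf : IsJointPMF 𝓡 p) (hpos : MargPos 𝓡 p)
    (hfact : SelOddsFactorizes 𝓡 PA p) :
    ∀ w : (∀ j, X j) → Pat d → ℝ,
      (Observable 𝓡 w ∧ ∀ ℓ, ∑ r ∈ 𝓡, w ℓ r * p ℓ r = 0) ↔
      (∃ Ψ : (∀ j, X j) → Pat d → ℝ, Observable 𝓡 Ψ ∧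
        ∀ ℓ, ∀ ρ ∈ 𝓡, w ℓ ρ =
          ∑ r ∈ 𝓡.erase (allOnes d),
            ((if ρ = r then (1:ℝ) else 0)
              - odds p PA r ℓ * (if ρ ∈ PA r then (1:ℝ) else 0)) * Ψ ℓ r) := by
  intro w
  constructor
  · rintro ⟨hw, hmz⟩
    refine ⟨fun ℓ r => Psi 𝓡 PA p w r ℓ, fun r hr ℓ ℓ' ha => Psi_obs 𝓡 PA p w hw r hr ℓ ℓ' ha, ?_⟩
    intro ℓ ρ hρ
    set E := 𝓡.erase (allOnes d) with hE
    have hfilter : ∀ ρ' : Pat d,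
        E.filter (fun r => ρ' ∈ PA r ∧ r < ρ') = E.filter (fun r => ρ' ∈ PA r) := by
      intro ρ'
      apply Finset.filter_congr
      intro r hrE
      obtain ⟨hrne, hr𝓡⟩ := Finset.mem_erase.mp hrE
      simp only [and_iff_left_iff_imp]
      exact fun hmem => (hG.2 r hr𝓡 hrne).2.2 ρ' hmem
    have hRHS : ∀ ρ' : Pat d,
        (∑ r ∈ E, ((if ρ' = r then (1:ℝ) else 0)
            - odds p PA r ℓ * (if ρ' ∈ PA r then (1:ℝ) else 0)) * Psi 𝓡 PA p w r ℓ)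
        = (if ρ' ∈ E then Psi 𝓡 PA p w ρ' ℓ else 0)
          - ∑ r ∈ E.filter (fun r => ρ' ∈ PA r), odds p PA r ℓ * Psi 𝓡 PA p w r ℓ := by
      intro ρ'
      have hsplit : ∀ r, ((if ρ' = r then (1:ℝ) else 0)
            - odds p PA r ℓ * (if ρ' ∈ PA r then (1:ℝ) else 0)) * Psi 𝓡 PA p w r ℓ
          = (if ρ' = r then Psi 𝓡 PA p w r ℓ else 0)
            - (if ρ' ∈ PA r then odds p PA r ℓ * Psi 𝓡 PA p w r ℓ else 0) := by
        intro r; split <;> split <;> ring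
      rw [Finset.sum_congr rfl fun r _ => hsplit r, Finset.sum_sub_distrib,
        Finset.sum_ite_eq, Finset.sum_filter]
    have hmain : ∀ ρ' ∈ E, w ℓ ρ' =
        ∑ r ∈ E, ((if ρ' = r then (1:ℝ) else 0)
          - odds p PA r ℓ * (if ρ' ∈ PA r then (1:ℝ) else 0)) * Psi 𝓡 PA p w r ℓ := by
      intro ρ' hρ'E
      rw [hRHS ρ', if_pos hρ'E, ← hfilter ρ', Psi_eq]
      ring
    by_cases hρ1 : ρ = allOnes d
    · subst hρ1
      have hz := aug_mean_zero 𝓡 PA hG p hfact (fun ℓ r => Psi 𝓡 PA p w r ℓ) ℓ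
      have hsum : ∑ ρ' ∈ 𝓡, (w ℓ ρ' - ∑ r ∈ E, ((if ρ' = r then (1:ℝ) else 0)
            - odds p PA r ℓ * (if ρ' ∈ PA r then (1:ℝ) else 0)) * Psi 𝓡 PA p w r ℓ)
            * p ℓ ρ' = 0 := by
        have : ∀ ρ' ∈ 𝓡, (w ℓ ρ' - ∑ r ∈ E, ((if ρ' = r then (1:ℝ) else 0)
            - odds p PA r ℓ * (if ρ' ∈ PA r then (1:ℝ) else 0)) * Psi 𝓡 PA p w r ℓ)
            * p ℓ ρ'
            = w ℓ ρ' * p ℓ ρ' - (∑ r ∈ E, ((if ρ' = r then (1:ℝ) else 0)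
            - odds p PA r ℓ * (if ρ' ∈ PA r then (1:ℝ) else 0)) * Psi 𝓡 PA p w r ℓ)
            * p ℓ ρ' := fun ρ' _ => by ring
        rw [Finset.sum_congr rfl this, Finset.sum_sub_distrib, hmz ℓ, hz]
        ring
      have hsplit2 : ∑ ρ' ∈ 𝓡, (w ℓ ρ' - ∑ r ∈ E, ((if ρ' = r then (1:ℝ) else 0)
            - odds p PA r ℓ * (if ρ' ∈ PA r then (1:ℝ) else 0)) * Psi 𝓡 PA p w r ℓ)
            * p ℓ ρ'
          = (w ℓ (allOnes d) - ∑ r ∈ E, ((if allOnes d = r then (1:ℝ) else 0)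
            - odds p PA r ℓ * (if allOnes d ∈ PA r then (1:ℝ) else 0)) * Psi 𝓡 PA p w r ℓ)
            * p ℓ (allOnes d) := by
        have hz2 : ∑ ρ' ∈ E, (w ℓ ρ' - ∑ r ∈ E, ((if ρ' = r then (1:ℝ) else 0)
            - odds p PA r ℓ * (if ρ' ∈ PA r then (1:ℝ) else 0)) * Psi 𝓡 PA p w r ℓ)
            * p ℓ ρ' = 0 :=
          Finset.sum_eq_zero fun ρ' hρ'E => by rw [← hmain ρ' hρ'E]; ring
        rw [← Finset.add_sum_erase 𝓡 _ h𝓡, ← hE, hz2, add_zero]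
      rw [hsplit2] at hsum
      have hp1 : 0 < p ℓ (allOnes d) := by
        have := hpos ℓ (allOnes d) h𝓡
        rwa [obsP_allOnes] at this
      have := mul_eq_zero.mp hsum
      rcases this with h | h
      · linarith [sub_eq_zero.mp h]
      · exact absurd h hp1.ne'
    · exact hmain ρ (Finset.mem_erase.mpr ⟨hρ1, hρ⟩)
  · rintro ⟨Ψ, hΨobs, hΨ⟩
    constructor
    · intro ρ hρ ℓ ℓ' ha
      rw [hΨ ℓ ρ hρ, hΨ ℓ' ρ hρ]
      apply Finset.sum_congr rfl
      intro r hr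
      obtain ⟨hrne, hr𝓡⟩ := Finset.mem_erase.mp hr
      by_cases hPA : ρ ∈ PA r
      · have har : agree r ℓ ℓ' := agree_mono ((hG.2 r hr𝓡 hrne).2.2 ρ hPA).le ha
        rw [odds_congr p PA har, hΨobs r hr𝓡 ℓ ℓ' har]
      · by_cases h1 : ρ = r
        · subst h1
          rw [hΨobs ρ hr𝓡 ℓ ℓ' ha]
          simp [hPA]
        · simp [h1, hPA]
    · intro ℓ
      have hz := aug_mean_zero 𝓡 PA hG p hfact Ψ ℓ
      rw [← hz]
      exact Finset.sum_congr rfl fun ρ hρ => by rw [hΨ ℓ ρ hρ]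
end
end

section
/- Let G be a regular pattern graph on a pattern set 𝓡, let p be a joint pmf satisfying marginal positivity whose selection odds model factorizes with respect to G, and let θ : ((j : Fin d) → X_j) → ℝ. Then the mean parameter decomposes over paths: Σ_ℓ θ(ℓ) · p(ℓ, 𝓡) = Σ_{r ∈ 𝓡} Σ_{Ξ ∈ Π_r} Σ_ℓ θ(ℓ) · p(ℓ, 1_d) · ∏_{s ∈ Ξ, s ≠ 1_d} O_s(ℓ); i.e. E[θ(L)] = θ_{1_d} + Σ_{r ≠ 1_d} Σ_{Ξ ∈ Π_r} θ_Ξ, where θ_Ξ = Σ_ℓ θ(ℓ) · p(ℓ, 1_d) · ∏_{s ∈ Ξ, s ≠ 1_d} O_s(ℓ) and θ_{1_d} = Σ_ℓ θ(ℓ) · p(ℓ, 1_d). -/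
open Finset

noncomputable section

variable {d : ℕ}


variable {X : Fin d → Type*} [∀ j, Fintype (X j)] [∀ j, DecidableEq (X j)]

lemma chain_gt_of_chainPA {𝓡 : Finset (Pat d)} {PA : Pat d → Finset (Pat d)}
    (hG : IsRegularGraph 𝓡 PA) :
    ∀ l : List (Pat d), (∀ q ∈ l, q ∈ 𝓡) → l.Chain' (fun a b => a ∈ PA b) →
      l.Chain' (· > ·) := by
  intro l
  induction l with
  | nil => intro _ _; exact List.isChain_nil
  | cons a t ih =>
    intro hmem hchain
    cases t with
    | nil => simp [List.Chain']
    | cons b t' =>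
      unfold List.Chain' at hchain ⊢
      rw [List.isChain_cons_cons] at hchain ⊢
      obtain ⟨hab, hrest⟩ := hchain
      have hb𝓡 : b ∈ 𝓡 := hmem b (by simp)
      have hbne : b ≠ allOnes d := by
        rintro rfl; rw [hG.1] at hab; exact absurd hab (Finset.notMem_empty a)
      exact ⟨(hG.2 b hb𝓡 hbne).2.2 a hab,
        ih (fun q hq => hmem q (List.mem_cons_of_mem a hq)) hrest⟩

lemma path_allOnes_eq {𝓡 : Finset (Pat d)} {PA : Pat d → Finset (Pat d)}
    (hG : IsRegularGraph 𝓡 PA) {Ξ : List (Pat d)}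
    (hp : IsPath 𝓡 PA (allOnes d) (allOnes d) Ξ) : Ξ = [allOnes d] := by
  obtain ⟨hne, hhead, hlast, hmem, hchain⟩ := hp
  cases Ξ with
  | nil => exact absurd rfl hne
  | cons a t =>
    simp only [List.head?_cons, Option.some.injEq] at hhead
    subst hhead
    cases t with
    | nil => rfl
    | cons b t' =>
      exfalso
      have hgt := chain_gt_of_chainPA hG _ hmem hchain
      unfold List.Chain' at hgt
      rw [List.isChain_iff_pairwise] at hgt
      have hlm : (b :: t').getLast (by simp) ∈ b :: t' := List.getLast_mem _
      have hgl : (allOnes d :: b :: t').getLast (by simp) = allOnes d := by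
        rw [List.getLast?_eq_getLast (by simp)] at hlast
        exact Option.some.inj hlast
      rw [List.getLast_cons (by simp : (b :: t') ≠ [])] at hgl
      have := (List.pairwise_cons.1 hgt).1 _ hlm
      rw [hgl] at this
      exact lt_irrefl _ this

lemma path_snoc {𝓡 : Finset (Pat d)} {PA : Pat d → Finset (Pat d)} {u s r : Pat d}
    {Ξ : List (Pat d)} (hp : IsPath 𝓡 PA u s Ξ) (hsr : s ∈ PA r) (hr : r ∈ 𝓡) :
    IsPath 𝓡 PA u r (Ξ ++ [r]) := by
  obtain ⟨hne, hhead, hlast, hmem, hchain⟩ := hp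
  cases Ξ with
  | nil => exact absurd rfl hne
  | cons a t =>
    simp only [List.head?_cons, Option.some.injEq] at hhead
    refine ⟨by simp, by simp [hhead], by rw [List.getLast?_concat], ?_, ?_⟩
    · intro q hq
      rcases List.mem_append.1 hq with h | h
      · exact hmem q h
      · simp only [List.mem_singleton] at h; exact h ▸ hr
    · unfold List.Chain'
      rw [List.isChain_append]
      refine ⟨hchain, by simp, ?_⟩
      intro x hx y hy
      simp only [List.head?_cons, Option.mem_def, Option.some.injEq] at hy
      rw [Option.mem_def, hlast, Option.some.injEq] at hx
      subst hx; subst hy; exact hsr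

lemma path_split {𝓡 : Finset (Pat d)} {PA : Pat d → Finset (Pat d)} {r : Pat d}
    {Ξ : List (Pat d)} (hr1 : r ≠ allOnes d)
    (hp : IsPath 𝓡 PA (allOnes d) r Ξ) :
    ∃ Ξ' s, Ξ = Ξ' ++ [r] ∧ s ∈ PA r ∧ IsPath 𝓡 PA (allOnes d) s Ξ' := by
  rcases List.eq_nil_or_concat Ξ with rfl | ⟨l, a, rfl⟩
  · exact absurd rfl hp.1
  simp only [List.concat_eq_append] at hp ⊢
  obtain ⟨hne, hhead, hlast, hmem, hchain⟩ := hp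
  have ha : a = r := by
    rw [List.getLast?_concat] at hlast; exact Option.some.inj hlast
  subst ha
  have hlne : l ≠ [] := by
    rintro rfl
    simp only [List.nil_append, List.head?_cons, Option.some.injEq] at hhead
    exact hr1 hhead
  unfold List.Chain' at hchain
  rw [List.isChain_append] at hchain
  obtain ⟨c1, -, hstep⟩ := hchain
  obtain ⟨s, hs⟩ : ∃ s, l.getLast? = some s :=
    ⟨l.getLast hlne, List.getLast?_eq_getLast hlne⟩
  refine ⟨l, s, rfl, hstep s hs a (by simp), hlne, ?_, hs,
    fun q hq => hmem q (List.mem_append.2 (Or.inl hq)), c1⟩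
  cases l with
  | nil => exact absurd rfl hlne
  | cons b t => simpa using hhead

/-- **Path decomposition of the mean.** Under selection-odds factorization w.r.t. a regular
pattern graph, `E[θ(L)] = Σ_{r ∈ 𝓡} Σ_{Ξ ∈ Π_r} θ_Ξ`, where
`θ_Ξ = Σ_ℓ θ(ℓ)·p(ℓ, 1_d)·∏_{s ∈ Ξ, s ≠ 1_d} O_s(ℓ)` (and the trivial path of `1_d`
contributes `θ_{1_d} = Σ_ℓ θ(ℓ)·p(ℓ, 1_d)`). -/
theorem mean_path_decomposition [∀ j, Nonempty (X j)]
    (𝓡 : Finset (Pat d)) (h𝓡 : allOnes d ∈ 𝓡)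
    (PA : Pat d → Finset (Pat d)) (hG : IsRegularGraph 𝓡 PA)
    (p : (∀ j, X j) → Pat d → ℝ)
    (hpmf : IsJointPMF 𝓡 p) (hpos : MargPos 𝓡 p)
    (hfact : SelOddsFactorizes 𝓡 PA p)
    (θ : (∀ j, X j) → ℝ)
    (Paths : Pat d → Finset (List (Pat d)))
    (hPaths : ∀ r, ∀ Ξ, Ξ ∈ Paths r ↔ IsPath 𝓡 PA (allOnes d) r Ξ) :
    ∑ ℓ : ∀ j, X j, θ ℓ * jointA p ℓ 𝓡
      = ∑ r ∈ 𝓡, ∑ Ξ ∈ Paths r, ∑ ℓ : ∀ j, X j,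
          θ ℓ * p ℓ (allOnes d) *
            (Ξ.map fun s => if s = allOnes d then (1:ℝ) else odds p PA s ℓ).prod := by
  have wf : WellFounded ((· > ·) : Pat d → Pat d → Prop) := IsWellFounded.wf
  have key : ∀ r, r ∈ 𝓡 → ∀ ℓ, p ℓ r
      = ∑ Ξ ∈ Paths r, p ℓ (allOnes d) *
          (Ξ.map fun s => if s = allOnes d then (1:ℝ) else odds p PA s ℓ).prod := by
    intro r
    refine wf.induction (C := fun r => r ∈ 𝓡 → ∀ ℓ, p ℓ r
      = ∑ Ξ ∈ Paths r, p ℓ (allOnes d) *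
          (Ξ.map fun s => if s = allOnes d then (1:ℝ) else odds p PA s ℓ).prod) r ?_
    intro r IH hr ℓ
    by_cases hr1 : r = allOnes d
    · subst hr1
      have hset : Paths (allOnes d) = {[allOnes d]} := by
        ext Ξ
        rw [hPaths, Finset.mem_singleton]
        constructor
        · exact path_allOnes_eq hG
        · rintro rfl
          exact ⟨by simp, by simp, by simp, by simpa using h𝓡, by simp [List.Chain']⟩
      rw [hset]
      simp
    · obtain ⟨-, hsub, hlt⟩ := hG.2 r hr hr1
      have hre : ∀ f : List (Pat d) → ℝ,
          ∑ Ξ ∈ Paths r, f Ξ = ∑ s ∈ PA r, ∑ Ξ ∈ Paths s, f (Ξ ++ [r]) := by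
        intro f
        rw [Finset.sum_sigma']
        refine Finset.sum_bij'
          (i := fun Ξ _ => (⟨(Ξ.dropLast.getLast?).getD (allOnes d), Ξ.dropLast⟩ :
            Σ _ : Pat d, List (Pat d)))
          (j := fun x _ => x.2 ++ [r]) ?_ ?_ ?_ ?_ ?_
        · intro Ξ hΞ
          obtain ⟨Ξ', s, rfl, hsr, hp'⟩ := path_split hr1 ((hPaths r Ξ).1 hΞ)
          rw [List.dropLast_concat, hp'.2.2.1]
          exact Finset.mem_sigma.2 ⟨hsr, (hPaths s Ξ').2 hp'⟩
        · intro x hx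
          rw [Finset.mem_sigma] at hx
          exact (hPaths r _).2 (path_snoc ((hPaths x.1 x.2).1 hx.2) hx.1 hr)
        · intro Ξ hΞ
          obtain ⟨Ξ', s, rfl, hsr, hp'⟩ := path_split hr1 ((hPaths r Ξ).1 hΞ)
          simp [List.dropLast_concat]
        · intro x hx
          rw [Finset.mem_sigma] at hx
          obtain ⟨s, Ξ'⟩ := x
          have hp' := (hPaths s Ξ').1 hx.2
          simp only [List.dropLast_concat, hp'.2.2.1, Option.getD_some]
        · intro Ξ hΞ
          obtain ⟨Ξ', s, rfl, hsr, hp'⟩ := path_split hr1 ((hPaths r Ξ).1 hΞ)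
          dsimp only
          rw [List.dropLast_concat]
      rw [hfact r hr hr1 ℓ]
      have hjoint : jointA p ℓ (PA r)
          = ∑ s ∈ PA r, ∑ Ξ ∈ Paths s, p ℓ (allOnes d) *
              (Ξ.map fun s => if s = allOnes d then (1:ℝ) else odds p PA s ℓ).prod :=
        Finset.sum_congr rfl fun s hs => IH s (hlt s hs) (hsub hs) ℓ
      rw [hjoint, hre, Finset.sum_mul]
      refine Finset.sum_congr rfl fun s hs => ?_
      rw [Finset.sum_mul]
      refine Finset.sum_congr rfl fun Ξ hΞ => ?_
      rw [List.map_append]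
      simp only [List.map_cons, List.map_nil, List.prod_append, List.prod_cons,
        List.prod_nil, if_neg hr1, mul_one]
      ring
  calc ∑ ℓ : ∀ j, X j, θ ℓ * jointA p ℓ 𝓡
      = ∑ ℓ : ∀ j, X j, ∑ r ∈ 𝓡, θ ℓ * p ℓ r := by
        refine Finset.sum_congr rfl fun ℓ _ => ?_
        rw [jointA, Finset.mul_sum]
    _ = ∑ r ∈ 𝓡, ∑ ℓ : ∀ j, X j, θ ℓ * p ℓ r := Finset.sum_comm
    _ = ∑ r ∈ 𝓡, ∑ Ξ ∈ Paths r, ∑ ℓ : ∀ j, X j,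
          θ ℓ * p ℓ (allOnes d) *
            (Ξ.map fun s => if s = allOnes d then (1:ℝ) else odds p PA s ℓ).prod := by
        refine Finset.sum_congr rfl fun r hr => ?_
        rw [← Finset.sum_comm]
        refine Finset.sum_congr rfl fun ℓ _ => ?_
        rw [key r hr ℓ, Finset.mul_sum]
        exact Finset.sum_congr rfl fun Ξ _ => by ring
end
end
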